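/- Let k₁, k₂ ≥ 1 be integers with k₁ + k₂ ≥ 3, let m₁, m₂ be integers, and let τ lie in the complex upper half-plane. Then lim_{N→∞} Σ (m₁τ+n₁)^{−k₁}(m₂τ+n₂)^{−k₂} = 0, where the sum ranges over integers n₁, n₂ with −N ≤ n₁, n₂ ≤ N, n₁+n₂ ∉ [−N, N], (m₁,n₁) ≠ (0,0), and (m₂,n₂) ≠ (0,0). -/

import Mathlib

open Complex Finset Filter


lemma lin_lower_bound (m : ℤ) (τ : ℂ) (hτ : 0 < τ.im) :
    ∃ c > 0, ∀ n : ℤ, c * |(n : ℝ)| ≤ ‖(m : ℂ) * τ + n‖ := by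
  rcases eq_or_ne m 0 with rfl | hm
  · exact ⟨1, one_pos, fun n => by simp⟩
  · set I : ℝ := |(m : ℝ)| * τ.im with hI
    set B : ℝ := |(m : ℝ) * τ.re| with hB
    have hI0 : 0 < I := by
      apply mul_pos _ hτ
      simpa using hm
    have hB0 : 0 ≤ B := abs_nonneg _
    refine ⟨I / (I + B), div_pos hI0 (by linarith), fun n => ?_⟩
    have him : ((m : ℂ) * τ + n).im = (m : ℝ) * τ.im := by simp
    have hre : ((m : ℂ) * τ + n).re = (m : ℝ) * τ.re + n := by simp
    have h1 : I ≤ ‖(m : ℂ) * τ + n‖ := by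
      have := Complex.abs_im_le_norm ((m : ℂ) * τ + n)
      rw [him] at this
      rw [abs_mul, abs_of_pos hτ] at this
      simpa using this
    have h2 : |(n : ℝ)| - B ≤ ‖(m : ℂ) * τ + n‖ := by
      have := Complex.abs_re_le_norm ((m : ℂ) * τ + n)
      rw [hre] at this
      have h3 : |(n : ℝ)| - B ≤ |(m : ℝ) * τ.re + n| := by
        have := abs_add_le ((m : ℝ) * τ.re) (n : ℝ)
        have h4 : |(n:ℝ)| ≤ |(m : ℝ) * τ.re + (n:ℝ)| + B := by
          calc |(n:ℝ)| = |((m : ℝ) * τ.re + n) + (-((m:ℝ) * τ.re))| := by ring_nf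
            _ ≤ |(m : ℝ) * τ.re + n| + B := by
                refine (abs_add_le _ _).trans ?_
                simp [hB]
        linarith
      calc |(n : ℝ)| - B ≤ |(m : ℝ) * τ.re + n| := h3
        _ ≤ _ := by simpa using this
    rcases le_or_gt (|(n : ℝ)|) (I + B) with h | h
    · calc I / (I + B) * |(n : ℝ)| ≤ I / (I + B) * (I + B) := by
            apply mul_le_mul_of_nonneg_left h (le_of_lt (div_pos hI0 (by linarith)))
        _ = I := by field_simp
        _ ≤ _ := h1
    · have : I / (I + B) * |(n : ℝ)| ≤ |(n : ℝ)| - B := by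
        rw [div_mul_eq_mul_div, div_le_iff₀ (by linarith)]
        nlinarith [abs_nonneg (n : ℝ)]
      linarith


lemma sum_Icc_symm (N : ℕ) (f : ℤ → ℝ) (hf : ∀ y, f (-y) = f y) :
    ∑ y ∈ Icc (-(N : ℤ)) N, f y = f 0 + 2 * ∑ y ∈ Icc (1 : ℤ) N, f y := by
  have hsplit : Icc (-(N : ℤ)) N = Icc (-(N:ℤ)) (-1) ∪ Icc 0 N := by
    ext a; simp only [Finset.mem_union, mem_Icc]; omega
  have hdisj : Disjoint (Icc (-(N:ℤ)) (-1)) (Icc (0:ℤ) N) := by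
    rw [Finset.disjoint_left]
    intro a ha hb
    simp only [mem_Icc] at ha hb
    omega
  rw [hsplit, Finset.sum_union hdisj]
  have h1 : ∑ y ∈ Icc (-(N:ℤ)) (-1), f y = ∑ y ∈ Icc (1:ℤ) N, f y := by
    apply Finset.sum_nbij' (fun y => -y) (fun y => -y)
    · intro a ha; simp only [mem_Icc] at *; omega
    · intro a ha; simp only [mem_Icc] at *; omega
    · intro a _; ring
    · intro a _; ring
    · intro a _; exact (hf a).symm ▸ (hf a)
  have h2 : ∑ y ∈ Icc (0:ℤ) N, f y = f 0 + ∑ y ∈ Icc (1:ℤ) N, f y := by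
    have : Icc (0:ℤ) N = insert (0:ℤ) (Icc (1:ℤ) (N:ℤ)) := by
      ext a; simp only [mem_insert, mem_Icc]; omega
    rw [this, Finset.sum_insert (by simp)]
  rw [h1, h2]; ring

lemma inv_sq_tail (N : ℕ) (M : ℤ) (hM : 1 ≤ M) :
    ∑ y ∈ (Icc (-(N : ℤ)) N).filter (fun y => M ≤ |y|), ((y : ℝ) ^ 2)⁻¹ ≤ 4 / M := by
  have key : ∀ (s : Finset ℤ), (∀ y ∈ s, M ≤ y ∧ y ≤ N) →
      ∑ y ∈ s, ((y : ℝ) ^ 2)⁻¹ ≤ 2 / M := by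
    intro s hs
    have hsub : s ⊆ (Finset.Ioo (M.toNat - 1) (N + 1)).map ⟨(Nat.cast : ℕ → ℤ), Nat.cast_injective⟩ := by
      intro y hy
      obtain ⟨hy1, hy2⟩ := hs y hy
      simp only [Finset.mem_map, Finset.mem_Ioo, Function.Embedding.coeFn_mk]
      exact ⟨y.toNat, by omega, by omega⟩
    calc ∑ y ∈ s, ((y : ℝ) ^ 2)⁻¹
        ≤ ∑ y ∈ (Finset.Ioo (M.toNat - 1) (N + 1)).map ⟨(Nat.cast : ℕ → ℤ), Nat.cast_injective⟩, ((y : ℝ) ^ 2)⁻¹ := by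
          apply Finset.sum_le_sum_of_subset_of_nonneg hsub
          intro i _ _; positivity
      _ = ∑ i ∈ Finset.Ioo (M.toNat - 1) (N + 1), ((i : ℝ) ^ 2)⁻¹ := by
          rw [Finset.sum_map]; simp
      _ ≤ 2 / ((M.toNat - 1 : ℕ) + 1) := sum_Ioo_inv_sq_le _ _
      _ ≤ 2 / M := by
          apply div_le_div_of_nonneg_left (by norm_num) (by positivity)
          push_cast [Nat.cast_sub (by omega : 1 ≤ M.toNat)]
          have : (M.toNat : ℝ) = M := by exact_mod_cast Int.toNat_of_nonneg (by omega)
          rw [this]; linarith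
  set T := (Icc (-(N : ℤ)) N).filter (fun y => M ≤ |y|)
  have hsplit : T = T.filter (fun y => 0 < y) ∪ T.filter (fun y => ¬ 0 < y) :=
    (Finset.filter_union_filter_not_eq _ T).symm
  have hdisj : Disjoint (T.filter (fun y => 0 < y)) (T.filter (fun y => ¬ 0 < y)) :=
    Finset.disjoint_filter_filter_not T T _
  rw [hsplit, Finset.sum_union hdisj]
  have h1 : ∑ y ∈ T.filter (fun y => 0 < y), ((y : ℝ) ^ 2)⁻¹ ≤ 2 / M := by
    apply key
    intro y hy
    simp only [T, Finset.mem_filter, mem_Icc] at hy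
    obtain ⟨⟨⟨ha, hb⟩, hc⟩, hd⟩ := hy
    rw [abs_of_pos hd] at hc
    omega
  have h2 : ∑ y ∈ T.filter (fun y => ¬ 0 < y), ((y : ℝ) ^ 2)⁻¹ ≤ 2 / M := by
    have : ∑ y ∈ T.filter (fun y => ¬ 0 < y), ((y : ℝ) ^ 2)⁻¹
        = ∑ y ∈ (T.filter (fun y => ¬ 0 < y)).image (fun y => -y), ((y : ℝ) ^ 2)⁻¹ := by
      rw [Finset.sum_image (by intro a _ b _ h; exact neg_injective h)]
      simp
    rw [this]
    apply key
    intro y hy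
    simp only [Finset.mem_image, T, Finset.mem_filter, mem_Icc] at hy
    obtain ⟨a, ⟨⟨⟨h1', h2'⟩, h3'⟩, h4'⟩, rfl⟩ := hy
    rw [abs_of_nonpos (by omega)] at h3'
    omega
  have h3 : (4 : ℝ) / M = 2 / M + 2 / M := by ring
  rw [h3]; exact add_le_add h1 h2

lemma counting (N : ℕ) :
    ∑ p ∈ (Icc (-(N : ℤ)) N ×ˢ Icc (-(N : ℤ)) N).filter (fun p => (N : ℤ) < |p.1 + p.2|),
      |(p.1 : ℝ)|⁻¹ * ((p.2 : ℝ) ^ 2)⁻¹ ≤ 16 * (1 + Real.log N) / ((N : ℝ) + 1) := by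
  set F : ℤ → ℝ := fun x => |(x : ℝ)|⁻¹ * (4 / ((N : ℝ) + 1 - |(x : ℝ)|)) with hF
  have step1 : ∑ p ∈ (Icc (-(N : ℤ)) N ×ˢ Icc (-(N : ℤ)) N).filter (fun p => (N : ℤ) < |p.1 + p.2|),
      |(p.1 : ℝ)|⁻¹ * ((p.2 : ℝ) ^ 2)⁻¹ ≤ ∑ x ∈ Icc (-(N : ℤ)) N, F x := by
    rw [Finset.sum_filter, Finset.sum_product]
    apply Finset.sum_le_sum
    intro x hx
    simp only [mem_Icc] at hx
    have hxN : |x| ≤ (N : ℤ) := abs_le.2 hx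
    have hM1 : (1 : ℤ) ≤ (N : ℤ) + 1 - |x| := by omega
    calc ∑ y ∈ Icc (-(N : ℤ)) N, (if (N : ℤ) < |x + y| then |(x : ℝ)|⁻¹ * ((y : ℝ) ^ 2)⁻¹ else 0)
        ≤ ∑ y ∈ Icc (-(N : ℤ)) N, (if (N : ℤ) + 1 - |x| ≤ |y| then |(x : ℝ)|⁻¹ * ((y : ℝ) ^ 2)⁻¹ else 0) := by
          apply Finset.sum_le_sum
          intro y hy
          split_ifs with h1 h2
          · exact le_rfl
          · exfalso; have := abs_add_le x y; omega
          · positivity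
          · exact le_rfl
      _ = |(x : ℝ)|⁻¹ * ∑ y ∈ (Icc (-(N : ℤ)) N).filter (fun y => (N : ℤ) + 1 - |x| ≤ |y|), ((y : ℝ) ^ 2)⁻¹ := by
          rw [← Finset.sum_filter, Finset.mul_sum]
      _ ≤ |(x : ℝ)|⁻¹ * (4 / (((N : ℤ) + 1 - |x| : ℤ) : ℝ)) := by
          apply mul_le_mul_of_nonneg_left (inv_sq_tail N _ hM1) (by positivity)
      _ = F x := by
          rw [hF]
          push_cast
          ring_nf
  refine step1.trans ?_
  have hsymm : ∀ y : ℤ, F (-y) = F y := by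
    intro y; simp only [hF]; push_cast; rw [abs_neg]
  rw [sum_Icc_symm N F hsymm]
  have hF0 : F 0 = 0 := by simp [hF]
  rw [hF0, zero_add]
  -- now bound 2 * ∑_{x=1}^N F x
  have hcong : ∀ x ∈ Icc (1 : ℤ) (N : ℤ),
      F x = 4 * ((N : ℝ) + 1)⁻¹ * ((x : ℝ)⁻¹ + ((N : ℝ) + 1 - (x : ℝ))⁻¹) := by
    intro x hx
    simp only [mem_Icc] at hx
    have hx0 : (0 : ℝ) < (x : ℝ) := by exact_mod_cast hx.1.trans_lt' (by norm_num)
    have hx1 : (0 : ℝ) < (N : ℝ) + 1 - (x : ℝ) := by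
      have : (x : ℝ) ≤ (N : ℝ) := by exact_mod_cast hx.2
      linarith
    rw [hF]
    simp only
    rw [abs_of_pos hx0]
    field_simp
    ring
  rw [Finset.sum_congr rfl hcong]
  have hrefl : ∑ x ∈ Icc (1 : ℤ) (N : ℤ), ((N : ℝ) + 1 - (x : ℝ))⁻¹
      = ∑ x ∈ Icc (1 : ℤ) (N : ℤ), ((x : ℝ))⁻¹ := by
    apply Finset.sum_nbij' (fun x => (N : ℤ) + 1 - x) (fun x => (N : ℤ) + 1 - x)
    · intro a ha; simp only [mem_Icc] at *; omega
    · intro a ha; simp only [mem_Icc] at *; omega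
    · intro a _; ring
    · intro a _; ring
    · intro a ha
      push_cast
      ring_nf
  have hH : ∑ x ∈ Icc (1 : ℤ) (N : ℤ), ((x : ℝ))⁻¹ ≤ 1 + Real.log N := by
    have hcast : ∑ x ∈ Icc (1 : ℤ) (N : ℤ), ((x : ℝ))⁻¹ = ∑ i ∈ Finset.Icc 1 N, ((i : ℝ))⁻¹ := by
      refine Finset.sum_nbij' (fun x => x.toNat) (fun i => (i : ℤ)) ?_ ?_ ?_ ?_ ?_
      · intro a ha; simp only [mem_Icc] at *; omega
      · intro a ha; simp only [mem_Icc] at *; omega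
      · intro a ha; simp only [mem_Icc] at ha; omega
      · intro a ha; simp only [mem_Icc] at ha; omega
      · intro a ha
        simp only [mem_Icc] at ha
        congr 1
        exact_mod_cast (Int.toNat_of_nonneg (by omega)).symm
    rw [hcast]
    have := harmonic_le_one_add_log N
    have heq : ((harmonic N : ℚ) : ℝ) = ∑ i ∈ Finset.Icc 1 N, ((i : ℝ))⁻¹ := by
      rw [harmonic_eq_sum_Icc]; push_cast; ring
    rw [← heq]
    exact_mod_cast this
  rw [← Finset.mul_sum, Finset.sum_add_distrib, hrefl]
  have hNpos : (0 : ℝ) < (N : ℝ) + 1 := by positivity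
  calc 2 * (4 * ((N : ℝ) + 1)⁻¹ * (∑ x ∈ Icc (1 : ℤ) (N : ℤ), ((x : ℝ))⁻¹ + ∑ x ∈ Icc (1 : ℤ) (N : ℤ), ((x : ℝ))⁻¹))
      = 16 * (∑ x ∈ Icc (1 : ℤ) (N : ℤ), ((x : ℝ))⁻¹) / ((N : ℝ) + 1) := by ring
    _ ≤ 16 * (1 + Real.log N) / ((N : ℝ) + 1) := by
        gcongr


lemma phi_tendsto : Tendsto (fun N : ℕ => 16 * (1 + Real.log N) / ((N : ℝ) + 1)) atTop (nhds 0) := by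
  have h1 : (fun _ : ℝ => (1 : ℝ)) =o[atTop] (id : ℝ → ℝ) := by
    apply Asymptotics.isLittleO_const_id_atTop
  have h2 := Real.isLittleO_log_id_atTop
  have h3 : (id : ℝ → ℝ) =O[atTop] (fun x : ℝ => x + 1) := by
    apply Asymptotics.IsBigO.of_bound 1
    filter_upwards [eventually_ge_atTop (0 : ℝ)] with x hx
    simp only [id_eq, norm_mul, Real.norm_eq_abs, one_mul]
    rw [_root_.abs_of_nonneg hx, _root_.abs_of_nonneg (by linarith)]
    linarith
  have A : (fun x : ℝ => 1 + Real.log x) =o[atTop] (fun x : ℝ => x + 1) :=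
    (h1.add h2).trans_isBigO h3
  have B := A.tendsto_div_nhds_zero
  have C := B.const_mul (16 : ℝ)
  rw [mul_zero] at C
  have D : Tendsto (fun x : ℝ => 16 * (1 + Real.log x) / (x + 1)) atTop (nhds 0) := by
    convert C using 2 with x
    ring
  exact D.comp tendsto_natCast_atTop_atTop

lemma term_bound {c : ℝ} (hc : 0 < c) {m n : ℤ} {τ : ℂ}
    (H : c * |(n : ℝ)| ≤ ‖(m : ℂ) * τ + n‖) {k a : ℕ} (ha : a ≤ k) (hn : n ≠ 0) :
    ‖((m : ℂ) * τ + n) ^ (-(k : ℤ))‖ ≤ c⁻¹ ^ k * (|(n : ℝ)| ^ a)⁻¹ := by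
  have hn1 : (1 : ℝ) ≤ |(n : ℝ)| := by
    have : (1 : ℤ) ≤ |n| := Int.one_le_abs (by omega)
    calc (1:ℝ) ≤ ((|n| : ℤ) : ℝ) := by exact_mod_cast this
      _ = |(n : ℝ)| := by push_cast; ring
  have hpos : 0 < c * |(n : ℝ)| := mul_pos hc (by linarith)
  rw [norm_zpow, zpow_neg, zpow_natCast]
  calc (‖(m : ℂ) * τ + n‖ ^ k)⁻¹ ≤ ((c * |(n : ℝ)|) ^ k)⁻¹ := by
        gcongr
    _ = c⁻¹ ^ k * (|(n : ℝ)| ^ k)⁻¹ := by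
        rw [mul_pow, mul_inv, inv_pow]
    _ ≤ c⁻¹ ^ k * (|(n : ℝ)| ^ a)⁻¹ := by
        gcongr

lemma counting' (N : ℕ) :
    ∑ p ∈ (Icc (-(N : ℤ)) N ×ˢ Icc (-(N : ℤ)) N).filter (fun p => (N : ℤ) < |p.1 + p.2|),
      ((p.1 : ℝ) ^ 2)⁻¹ * |(p.2 : ℝ)|⁻¹ ≤ 16 * (1 + Real.log N) / ((N : ℝ) + 1) := by
  have heq : ∑ p ∈ (Icc (-(N : ℤ)) N ×ˢ Icc (-(N : ℤ)) N).filter (fun p => (N : ℤ) < |p.1 + p.2|),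
      ((p.1 : ℝ) ^ 2)⁻¹ * |(p.2 : ℝ)|⁻¹
      = ∑ p ∈ (Icc (-(N : ℤ)) N ×ˢ Icc (-(N : ℤ)) N).filter (fun p => (N : ℤ) < |p.1 + p.2|),
      |(p.1 : ℝ)|⁻¹ * ((p.2 : ℝ) ^ 2)⁻¹ := by
    refine Finset.sum_nbij' Prod.swap Prod.swap ?_ ?_ ?_ ?_ ?_
    · intro p hp
      simp only [Finset.mem_filter, Finset.mem_product, Finset.mem_Icc, Prod.fst_swap,
        Prod.snd_swap] at *
      exact ⟨⟨hp.1.2, hp.1.1⟩, by rw [add_comm]; exact hp.2⟩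
    · intro p hp
      simp only [Finset.mem_filter, Finset.mem_product, Finset.mem_Icc, Prod.fst_swap,
        Prod.snd_swap] at *
      exact ⟨⟨hp.1.2, hp.1.1⟩, by rw [add_comm]; exact hp.2⟩
    · intro p _; rfl
    · intro p _; rfl
    · intro p _
      simp only [Prod.fst_swap, Prod.snd_swap]
      ring
  rw [heq]
  exact counting N

theorem tail_sum_tendsto_zero (k₁ k₂ : ℕ) (h₁ : 1 ≤ k₁) (h₂ : 1 ≤ k₂)
    (h₃ : 3 ≤ k₁ + k₂) (m₁ m₂ : ℤ) (τ : ℂ) (hτ : 0 < τ.im) :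
    Filter.Tendsto
      (fun N : ℕ =>
        ∑ p ∈ (Finset.Icc (-(N : ℤ)) N ×ˢ Finset.Icc (-(N : ℤ)) N).filter
            (fun p => p.1 + p.2 ∉ Finset.Icc (-(N : ℤ)) N ∧
              (m₁, p.1) ≠ (0, 0) ∧ (m₂, p.2) ≠ (0, 0)),
          ((m₁ : ℂ) * τ + p.1) ^ (-(k₁ : ℤ)) * ((m₂ : ℂ) * τ + p.2) ^ (-(k₂ : ℤ)))
      Filter.atTop (nhds 0) := by
  obtain ⟨c₁, hc₁, H₁⟩ := lin_lower_bound m₁ τ hτ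
  obtain ⟨c₂, hc₂, H₂⟩ := lin_lower_bound m₂ τ hτ
  set C : ℝ := c₁⁻¹ ^ k₁ * c₂⁻¹ ^ k₂ with hCdef
  have hC : 0 ≤ C := by positivity
  apply squeeze_zero_norm (a := fun N : ℕ => C * (16 * (1 + Real.log N) / ((N : ℝ) + 1)))
  swap
  · simpa using phi_tendsto.const_mul C
  intro N
  set S := (Finset.Icc (-(N : ℤ)) N ×ˢ Finset.Icc (-(N : ℤ)) N).filter
      (fun p => p.1 + p.2 ∉ Finset.Icc (-(N : ℤ)) N ∧
        (m₁, p.1) ≠ (0, 0) ∧ (m₂, p.2) ≠ (0, 0)) with hS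
  set R := (Icc (-(N : ℤ)) N ×ˢ Icc (-(N : ℤ)) N).filter
      (fun p => (N : ℤ) < |p.1 + p.2|) with hR
  have hmem : ∀ p ∈ S, p ∈ R ∧ p.1 ≠ 0 ∧ p.2 ≠ 0 := by
    intro p hp
    simp only [hS, Finset.mem_filter, Finset.mem_product, Finset.mem_Icc] at hp
    obtain ⟨⟨⟨ha1, ha2⟩, hb1, hb2⟩, hnot, -, -⟩ := hp
    have habs : (N : ℤ) < |p.1 + p.2| := by
      by_contra h
      exact hnot (_root_.abs_le.mp (not_lt.mp h))
    have hp1 : p.1 ≠ 0 := by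
      intro h0
      rw [h0, zero_add] at habs
      exact absurd habs (not_lt.mpr (abs_le.mpr ⟨hb1, hb2⟩))
    have hp2 : p.2 ≠ 0 := by
      intro h0
      rw [h0, add_zero] at habs
      exact absurd habs (not_lt.mpr (abs_le.mpr ⟨ha1, ha2⟩))
    refine ⟨?_, hp1, hp2⟩
    rw [hR, Finset.mem_filter, Finset.mem_product]
    exact ⟨⟨Finset.mem_Icc.mpr ⟨ha1, ha2⟩, Finset.mem_Icc.mpr ⟨hb1, hb2⟩⟩, habs⟩
  rcases (by omega : 2 ≤ k₂ ∨ 2 ≤ k₁) with hk | hk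
  · calc ‖∑ p ∈ S, ((m₁ : ℂ) * τ + p.1) ^ (-(k₁ : ℤ)) * ((m₂ : ℂ) * τ + p.2) ^ (-(k₂ : ℤ))‖
        ≤ ∑ p ∈ S, ‖((m₁ : ℂ) * τ + p.1) ^ (-(k₁ : ℤ)) * ((m₂ : ℂ) * τ + p.2) ^ (-(k₂ : ℤ))‖ :=
          norm_sum_le _ _
      _ ≤ ∑ p ∈ S, C * (|(p.1 : ℝ)|⁻¹ * ((p.2 : ℝ) ^ 2)⁻¹) := by
          apply Finset.sum_le_sum
          intro p hp
          obtain ⟨-, hp1, hp2⟩ := hmem p hp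
          rw [norm_mul]
          have b1 := term_bound hc₁ (H₁ p.1) h₁ hp1
          have b2 := term_bound hc₂ (H₂ p.2) hk hp2
          calc ‖((m₁ : ℂ) * τ + p.1) ^ (-(k₁ : ℤ))‖ * ‖((m₂ : ℂ) * τ + p.2) ^ (-(k₂ : ℤ))‖
              ≤ (c₁⁻¹ ^ k₁ * (|(p.1 : ℝ)| ^ 1)⁻¹) * (c₂⁻¹ ^ k₂ * (|(p.2 : ℝ)| ^ 2)⁻¹) :=
                mul_le_mul b1 b2 (norm_nonneg _) (by positivity)
            _ = C * (|(p.1 : ℝ)|⁻¹ * ((p.2 : ℝ) ^ 2)⁻¹) := by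
                rw [hCdef, pow_one, _root_.sq_abs]; ring
      _ = C * ∑ p ∈ S, |(p.1 : ℝ)|⁻¹ * ((p.2 : ℝ) ^ 2)⁻¹ := (Finset.mul_sum _ _ _).symm
      _ ≤ C * ∑ p ∈ R, |(p.1 : ℝ)|⁻¹ * ((p.2 : ℝ) ^ 2)⁻¹ := by
          apply mul_le_mul_of_nonneg_left _ hC
          apply Finset.sum_le_sum_of_subset_of_nonneg (fun p hp => (hmem p hp).1)
          intro p _ _
          positivity
      _ ≤ C * (16 * (1 + Real.log N) / ((N : ℝ) + 1)) :=
          mul_le_mul_of_nonneg_left (counting N) hC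
  · calc ‖∑ p ∈ S, ((m₁ : ℂ) * τ + p.1) ^ (-(k₁ : ℤ)) * ((m₂ : ℂ) * τ + p.2) ^ (-(k₂ : ℤ))‖
        ≤ ∑ p ∈ S, ‖((m₁ : ℂ) * τ + p.1) ^ (-(k₁ : ℤ)) * ((m₂ : ℂ) * τ + p.2) ^ (-(k₂ : ℤ))‖ :=
          norm_sum_le _ _
      _ ≤ ∑ p ∈ S, C * (((p.1 : ℝ) ^ 2)⁻¹ * |(p.2 : ℝ)|⁻¹) := by
          apply Finset.sum_le_sum
          intro p hp
          obtain ⟨-, hp1, hp2⟩ := hmem p hp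
          rw [norm_mul]
          have b1 := term_bound hc₁ (H₁ p.1) hk hp1
          have b2 := term_bound hc₂ (H₂ p.2) h₂ hp2
          calc ‖((m₁ : ℂ) * τ + p.1) ^ (-(k₁ : ℤ))‖ * ‖((m₂ : ℂ) * τ + p.2) ^ (-(k₂ : ℤ))‖
              ≤ (c₁⁻¹ ^ k₁ * (|(p.1 : ℝ)| ^ 2)⁻¹) * (c₂⁻¹ ^ k₂ * (|(p.2 : ℝ)| ^ 1)⁻¹) :=
                mul_le_mul b1 b2 (norm_nonneg _) (by positivity)
            _ = C * (((p.1 : ℝ) ^ 2)⁻¹ * |(p.2 : ℝ)|⁻¹) := by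
                rw [hCdef, pow_one, _root_.sq_abs]; ring
      _ = C * ∑ p ∈ S, ((p.1 : ℝ) ^ 2)⁻¹ * |(p.2 : ℝ)|⁻¹ := (Finset.mul_sum _ _ _).symm
      _ ≤ C * ∑ p ∈ R, ((p.1 : ℝ) ^ 2)⁻¹ * |(p.2 : ℝ)|⁻¹ := by
          apply mul_le_mul_of_nonneg_left _ hC
          apply Finset.sum_le_sum_of_subset_of_nonneg (fun p hp => (hmem p hp).1)
          intro p _ _
          positivity
      _ ≤ C * (16 * (1 + Real.log N) / ((N : ℝ) + 1)) :=
          mul_le_mul_of_nonneg_left (counting' N) hC
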